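/- Generable functions on star domains are polynomial-length computable: let I ⊆ ℝ^d be open and connected and let f : I → ℝ^e belong to GPVAL, witnessed by data (sp, n, p, x₀, y₀, y) as in the definition of GPVAL. If I is star-shaped with respect to the base point x₀ (i.e., for every x ∈ I the segment [x₀, x] is contained in I), then f belongs to AP. -/

import Mathlib

noncomputable section

/-- one-variable polynomial with absolute values of coefficients -/
def pAbs (q : Polynomial ℝ) : Polynomial ℝ :=
  ∑ i ∈ q.support, Polynomial.C |q.coeff i| * Polynomial.X ^ i

lemma pAbs_eval (q : Polynomial ℝ) (a : ℝ) :
    (pAbs q).eval a = ∑ i ∈ q.support, |q.coeff i| * a ^ i := by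
  simp [pAbs, Polynomial.eval_finset_sum]

lemma pAbs_eval_nonneg (q : Polynomial ℝ) {a : ℝ} (ha : 0 ≤ a) : 0 ≤ (pAbs q).eval a := by
  rw [pAbs_eval]
  exact Finset.sum_nonneg fun i _ => mul_nonneg (abs_nonneg _) (pow_nonneg ha _)

lemma abs_eval_le_pAbs (q : Polynomial ℝ) {a b : ℝ} (h : |a| ≤ b) :
    |q.eval a| ≤ (pAbs q).eval b := by
  rw [pAbs_eval, Polynomial.eval_eq_sum, Polynomial.sum]
  refine (Finset.abs_sum_le_sum_abs _ _).trans (Finset.sum_le_sum fun i _ => ?_)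
  rw [abs_mul, abs_pow]
  exact mul_le_mul_of_nonneg_left (pow_le_pow_left₀ (abs_nonneg _) h i) (abs_nonneg _)

/-- multivariate polynomial abs-coefficient bound -/
def mvAbs {k : ℕ} (P : MvPolynomial (Fin k) ℝ) : Polynomial ℝ :=
  ∑ m ∈ P.support, Polynomial.C |MvPolynomial.coeff m P| * Polynomial.X ^ (m.sum fun _ e => e)

lemma mvAbs_eval {k : ℕ} (P : MvPolynomial (Fin k) ℝ) (a : ℝ) :
    (mvAbs P).eval a = ∑ m ∈ P.support, |MvPolynomial.coeff m P| * a ^ (m.sum fun _ e => e) := by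
  simp [mvAbs, Polynomial.eval_finset_sum]

lemma mvAbs_eval_nonneg {k : ℕ} (P : MvPolynomial (Fin k) ℝ) {a : ℝ} (ha : 0 ≤ a) :
    0 ≤ (mvAbs P).eval a := by
  rw [mvAbs_eval]
  exact Finset.sum_nonneg fun i _ => mul_nonneg (abs_nonneg _) (pow_nonneg ha _)

lemma mvAbs_mono {k : ℕ} (P : MvPolynomial (Fin k) ℝ) {a b : ℝ} (ha : 0 ≤ a) (hab : a ≤ b) :
    (mvAbs P).eval a ≤ (mvAbs P).eval b := by
  rw [mvAbs_eval, mvAbs_eval]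
  exact Finset.sum_le_sum fun i _ =>
    mul_le_mul_of_nonneg_left (pow_le_pow_left₀ ha hab _) (abs_nonneg _)

lemma abs_eval_le_mvAbs {k : ℕ} (P : MvPolynomial (Fin k) ℝ) (v : Fin k → ℝ) :
    |MvPolynomial.eval v P| ≤ (mvAbs P).eval ‖v‖ := by
  rw [mvAbs_eval, MvPolynomial.eval_eq]
  refine (Finset.abs_sum_le_sum_abs _ _).trans (Finset.sum_le_sum fun m _ => ?_)
  rw [abs_mul]
  refine mul_le_mul_of_nonneg_left ?_ (abs_nonneg _)
  rw [Finset.abs_prod]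
  calc ∏ i ∈ m.support, |v i ^ m i| ≤ ∏ i ∈ m.support, ‖v‖ ^ m i := by
        refine Finset.prod_le_prod (fun i _ => abs_nonneg _) (fun i _ => ?_)
        rw [abs_pow]
        exact pow_le_pow_left₀ (abs_nonneg _) (norm_le_pi_norm v i) _
    _ = ‖v‖ ^ (m.sum fun _ e => e) := by rw [Finset.prod_pow_eq_pow_sum]; rfl

lemma abs_eval_le_mvAbs' {k : ℕ} (P : MvPolynomial (Fin k) ℝ) (v : Fin k → ℝ) {b : ℝ}
    (hb : ‖v‖ ≤ b) : |MvPolynomial.eval v P| ≤ (mvAbs P).eval b :=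
  (abs_eval_le_mvAbs P v).trans (mvAbs_mono P (norm_nonneg v) hb)


/-- Evaluation of a vector of multivariate polynomials at a point. -/
def pEval {d e : ℕ} (p : Fin e → MvPolynomial (Fin d) ℝ) (x : Fin d → ℝ) : Fin e → ℝ :=
  fun i => MvPolynomial.eval x (p i)

/-- Length of the solution curve of the PIVP `y' = p(y)` on `[0, t]`
(the sup norm of the derivative is integrated). -/
def pLen {d : ℕ} (p : Fin d → MvPolynomial (Fin d) ℝ) (y : ℝ → Fin d → ℝ) (t : ℝ) : ℝ :=
  ∫ s in (0:ℝ)..t, ‖pEval p (y s)‖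

/-- `Ω : ℝ₊² → ℝ₊` is a polynomial function. -/
def IsPolyFun2 (Ω : ℝ → ℝ → ℝ) : Prop :=
  (∃ P : MvPolynomial (Fin 2) ℝ, ∀ a b : ℝ, Ω a b = MvPolynomial.eval ![a, b] P) ∧
  ∀ a b : ℝ, 0 ≤ a → 0 ≤ b → 0 ≤ Ω a b

/-- The class `AP` of polynomial-length computable partial functions `f :⊆ ℝⁿ → ℝᵐ`
(`dom` is the domain of `f`). -/
def AP {n m : ℕ} (dom : Set (Fin n → ℝ)) (f : (Fin n → ℝ) → (Fin m → ℝ)) : Prop :=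
  ∃ (d : ℕ) (hd : m ≤ d) (p : Fin d → MvPolynomial (Fin d) ℝ)
    (q : Fin d → MvPolynomial (Fin n) ℝ) (Ω : ℝ → ℝ → ℝ),
    IsPolyFun2 Ω ∧
    ∀ x ∈ dom, ∃ y : ℝ → Fin d → ℝ,
      (y 0 = fun i => MvPolynomial.eval x (q i)) ∧
      (∀ t : ℝ, 0 ≤ t → HasDerivAt y (pEval p (y t)) t) ∧
      (∀ t : ℝ, 0 ≤ t → ∀ μ : ℝ, 0 ≤ μ → Ω ‖x‖ μ ≤ pLen p y t →
        ‖(fun i : Fin m => y t (Fin.castLE hd i)) - f x‖ ≤ Real.exp (-μ)) ∧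
      (∀ t : ℝ, 0 ≤ t → t ≤ pLen p y t)

/-- The continuous linear map `ℝ^d → ℝ^n` associated to an `n × d` real matrix. -/
def matLin {n d : ℕ} (M : Matrix (Fin n) (Fin d) ℝ) : (Fin d → ℝ) →L[ℝ] (Fin n → ℝ) :=
  LinearMap.toContinuousLinearMap (Matrix.toLin' M)

lemma matLin_apply {n d : ℕ} (M : Matrix (Fin n) (Fin d) ℝ) (v : Fin d → ℝ) (i : Fin n) :
    matLin M v i = ∑ j, M i j * v j := by
  simp [matLin, Matrix.toLin'_apply, Matrix.mulVec, dotProduct]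

/-- The class `GPVAL` of polynomially bounded generable functions on `I`. -/
def GPVAL {d e : ℕ} (I : Set (Fin d → ℝ)) (f : (Fin d → ℝ) → (Fin e → ℝ)) : Prop :=
  ∃ (sp : Polynomial ℝ) (n : ℕ) (hn : e ≤ n)
    (p : Matrix (Fin n) (Fin d) (MvPolynomial (Fin n) ℝ))
    (x₀ : Fin d → ℝ) (y₀ : Fin n → ℝ) (y : (Fin d → ℝ) → (Fin n → ℝ)),
    (∀ a : ℝ, 0 ≤ a → 0 ≤ sp.eval a) ∧
    x₀ ∈ I ∧ y x₀ = y₀ ∧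
    (∀ x ∈ I, HasFDerivAt y (matLin (fun i j => MvPolynomial.eval (y x) (p i j))) x) ∧
    (∀ x ∈ I, ∀ i : Fin e, f x i = y x (Fin.castLE hn i)) ∧
    (∀ x ∈ I, ‖y x‖ ≤ sp.eval ‖x‖)

set_option maxHeartbeats 2000000 in
/-- **Generable functions on star domains are polynomial-length computable.**
If `f ∈ GPVAL` on `I`, witnessed by data `(sp, n, p, x₀, y₀, y)`, and `I` is
star-shaped with respect to the base point `x₀`, then `f ∈ AP` (with domain `I`). -/
theorem gpval_star_domain_mem_ap {d e n : ℕ} (hn : e ≤ n)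
    (I : Set (Fin d → ℝ)) (hIopen : IsOpen I) (hIconn : IsConnected I)
    (f : (Fin d → ℝ) → (Fin e → ℝ))
    (sp : Polynomial ℝ) (hsp : ∀ a : ℝ, 0 ≤ a → 0 ≤ sp.eval a)
    (p : Matrix (Fin n) (Fin d) (MvPolynomial (Fin n) ℝ))
    (x₀ : Fin d → ℝ) (hx₀ : x₀ ∈ I) (y₀ : Fin n → ℝ)
    (y : (Fin d → ℝ) → (Fin n → ℝ))
    (hinit : y x₀ = y₀)
    (hjac : ∀ x ∈ I, HasFDerivAt y (matLin (fun i j => MvPolynomial.eval (y x) (p i j))) x)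
    (hval : ∀ x ∈ I, ∀ i : Fin e, f x i = y x (Fin.castLE hn i))
    (hbound : ∀ x ∈ I, ‖y x‖ ≤ sp.eval ‖x‖)
    (hstar : ∀ x ∈ I, segment ℝ x₀ x ⊆ I) :
    AP I f := by
  classical
  -- bounding polynomials
  set SP : Polynomial ℝ := (pAbs sp).comp (Polynomial.C ‖x₀‖ + Polynomial.X) with hSP
  set EB : Polynomial ℝ := (∑ i : Fin n, ∑ j : Fin d, mvAbs (p i j)).comp SP with hEB
  set Cp : Polynomial ℝ := Polynomial.C (d:ℝ) * EB * (Polynomial.C ‖x₀‖ + Polynomial.X) with hCp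
  have hSPval : ∀ a : ℝ, SP.eval a = (pAbs sp).eval (‖x₀‖ + a) := by
    intro a; simp [hSP, Polynomial.eval_comp]
  have hSPnonneg : ∀ a : ℝ, 0 ≤ a → 0 ≤ SP.eval a := by
    intro a ha; rw [hSPval]
    exact pAbs_eval_nonneg _ (by positivity)
  have hEBval : ∀ a : ℝ,
      EB.eval a = ∑ i : Fin n, ∑ j : Fin d, (mvAbs (p i j)).eval (SP.eval a) := by
    intro a; simp [hEB, Polynomial.eval_comp, Polynomial.eval_finset_sum]
  have hEBnonneg : ∀ a : ℝ, 0 ≤ a → 0 ≤ EB.eval a := by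
    intro a ha; rw [hEBval]
    exact Finset.sum_nonneg fun i _ => Finset.sum_nonneg fun j _ =>
      mvAbs_eval_nonneg _ (hSPnonneg a ha)
  have hEBle : ∀ a : ℝ, 0 ≤ a → ∀ i j, (mvAbs (p i j)).eval (SP.eval a) ≤ EB.eval a := by
    intro a ha i j; rw [hEBval]
    calc (mvAbs (p i j)).eval (SP.eval a)
        ≤ ∑ j' : Fin d, (mvAbs (p i j')).eval (SP.eval a) :=
          Finset.single_le_sum (fun j' _ => mvAbs_eval_nonneg _ (hSPnonneg a ha))
            (Finset.mem_univ j)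
      _ ≤ ∑ i' : Fin n, ∑ j' : Fin d, (mvAbs (p i' j')).eval (SP.eval a) :=
          Finset.single_le_sum (f := fun i' => ∑ j' : Fin d, (mvAbs (p i' j')).eval (SP.eval a))
            (fun i' _ => Finset.sum_nonneg fun j' _ => mvAbs_eval_nonneg _ (hSPnonneg a ha))
            (Finset.mem_univ i)
  have hCpval : ∀ a : ℝ, Cp.eval a = (d:ℝ) * EB.eval a * (‖x₀‖ + a) := by
    intro a; simp [hCp]
  have hCpnonneg : ∀ a : ℝ, 0 ≤ a → 0 ≤ Cp.eval a := by
    intro a ha; rw [hCpval]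
    have h1 := hEBnonneg a ha
    have h2 : (0:ℝ) ≤ ‖x₀‖ + a := by positivity
    positivity
  -- dimensions and indices
  have hd : e ≤ n + (d + 2) := hn.trans (Nat.le_add_right _ _)
  set uI : Fin (n + (d + 2)) := Fin.natAdd n 0 with huI
  set cI : Fin d → Fin (n + (d + 2)) := fun j => Fin.natAdd n (Fin.succ (Fin.castSucc j)) with hcI
  -- the PIVP and its initial condition
  set P : Fin (n + (d + 2)) → MvPolynomial (Fin (n + (d + 2))) ℝ :=
    Fin.append
      (fun i => MvPolynomial.X uI *
        ∑ j : Fin d, MvPolynomial.rename (Fin.castAdd (d + 2)) (p i j) * MvPolynomial.X (cI j))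
      (Fin.cons (- MvPolynomial.X uI) (Fin.snoc (fun _ => 0) 1)) with hP
  set Q : Fin (n + (d + 2)) → MvPolynomial (Fin d) ℝ :=
    Fin.append (fun i => MvPolynomial.C (y₀ i))
      (Fin.cons 1 (Fin.snoc (fun j => MvPolynomial.X j - MvPolynomial.C (x₀ j)) 0)) with hQ
  have hPmain : ∀ i : Fin n, P (Fin.castAdd (d + 2) i) = MvPolynomial.X uI *
      ∑ j : Fin d, MvPolynomial.rename (Fin.castAdd (d + 2)) (p i j) * MvPolynomial.X (cI j) := by
    intro i; rw [hP]; exact Fin.append_left _ _ _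
  have hPu : P (Fin.natAdd n 0) = - MvPolynomial.X uI := by
    rw [hP, Fin.append_right]; exact Fin.cons_zero _ _
  have hPw : P (Fin.natAdd n (Fin.succ (Fin.last d))) = 1 := by
    rw [hP, Fin.append_right, Fin.cons_succ, Fin.snoc_last]
  have hPc : ∀ j : Fin d, P (Fin.natAdd n (Fin.succ (Fin.castSucc j))) = 0 := by
    intro j; rw [hP, Fin.append_right, Fin.cons_succ, Fin.snoc_castSucc]
  have hQmain : ∀ i : Fin n, Q (Fin.castAdd (d + 2) i) = MvPolynomial.C (y₀ i) := by
    intro i; rw [hQ]; exact Fin.append_left _ _ _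
  have hQu : Q (Fin.natAdd n 0) = 1 := by
    rw [hQ, Fin.append_right]; exact Fin.cons_zero _ _
  have hQw : Q (Fin.natAdd n (Fin.succ (Fin.last d))) = 0 := by
    rw [hQ, Fin.append_right, Fin.cons_succ, Fin.snoc_last]
  have hQc : ∀ j : Fin d, Q (Fin.natAdd n (Fin.succ (Fin.castSucc j)))
      = MvPolynomial.X j - MvPolynomial.C (x₀ j) := by
    intro j; rw [hQ, Fin.append_right, Fin.cons_succ, Fin.snoc_castSucc]
  refine ⟨n + (d + 2), hd, P, Q, fun a μ => (Cp.eval a + 1) * (μ + Cp.eval a), ⟨?_, ?_⟩, ?_⟩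
  · -- Ω is a polynomial function
    set A : MvPolynomial (Fin 2) ℝ :=
      Polynomial.eval₂ (MvPolynomial.C : ℝ →+* MvPolynomial (Fin 2) ℝ) (MvPolynomial.X 0) Cp
      with hA
    have hAval : ∀ v : Fin 2 → ℝ, MvPolynomial.eval v A = Cp.eval (v 0) := by
      intro v
      rw [hA, Polynomial.hom_eval₂]
      have h : (MvPolynomial.eval v).comp (MvPolynomial.C : ℝ →+* MvPolynomial (Fin 2) ℝ)
          = RingHom.id ℝ := RingHom.ext fun r => by simp
      rw [h, MvPolynomial.eval_X]
      rfl
    refine ⟨(A + 1) * (MvPolynomial.X 1 + A), fun a b => ?_⟩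
    rw [map_mul, map_add, map_add, hAval, MvPolynomial.eval_X, map_one]
    simp
  · -- Ω nonneg
    intro a b ha hb
    have := hCpnonneg a ha
    have h1 : (0:ℝ) ≤ Cp.eval a + 1 := by linarith
    have h2 : (0:ℝ) ≤ b + Cp.eval a := by linarith
    exact mul_nonneg h1 h2
  -- main clause
  intro x hx
  have hsegI : segment ℝ x₀ x ⊆ I := hstar x hx
  have hsegnorm : ∀ z ∈ segment ℝ x₀ x, ‖z‖ ≤ ‖x₀‖ + ‖x‖ := by
    intro z hz
    rw [segment_eq_image] at hz
    obtain ⟨θ, ⟨h0, h1⟩, rfl⟩ := hz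
    have h2 := norm_add_le ((1 - θ) • x₀) (θ • x)
    rw [norm_smul, norm_smul, Real.norm_eq_abs, Real.norm_eq_abs,
      abs_of_nonneg (by linarith), abs_of_nonneg h0] at h2
    nlinarith [norm_nonneg x₀, norm_nonneg x]
  have hyb : ∀ z ∈ segment ℝ x₀ x, ‖y z‖ ≤ SP.eval ‖x‖ := by
    intro z hz
    refine (hbound z (hsegI hz)).trans ?_
    rw [hSPval]
    exact (le_abs_self _).trans (abs_eval_le_pAbs sp
      (by rw [abs_of_nonneg (norm_nonneg z)]; exact hsegnorm z hz))
  have hentry : ∀ z ∈ segment ℝ x₀ x, ∀ i j,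
      |MvPolynomial.eval (y z) (p i j)| ≤ EB.eval ‖x‖ := fun z hz i j =>
    (abs_eval_le_mvAbs' _ _ (hyb z hz)).trans (hEBle ‖x‖ (norm_nonneg x) i j)
  have hEBx : (0:ℝ) ≤ EB.eval ‖x‖ := hEBnonneg _ (norm_nonneg x)
  have hK : (0:ℝ) ≤ (d:ℝ) * EB.eval ‖x‖ := by positivity
  have hop : ∀ z ∈ segment ℝ x₀ x,
      ‖matLin (fun i j => MvPolynomial.eval (y z) (p i j))‖ ≤ (d:ℝ) * EB.eval ‖x‖ := by
    intro z hz
    refine ContinuousLinearMap.opNorm_le_bound _ hK fun v => ?_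
    rw [pi_norm_le_iff_of_nonneg (by positivity)]
    intro i
    rw [matLin_apply (fun i j => MvPolynomial.eval (y z) (p i j)) v i, Real.norm_eq_abs]
    calc |∑ j, MvPolynomial.eval (y z) (p i j) * v j|
        ≤ ∑ j, |MvPolynomial.eval (y z) (p i j) * v j| := Finset.abs_sum_le_sum_abs _ _
      _ ≤ ∑ _j : Fin d, EB.eval ‖x‖ * ‖v‖ := by
          refine Finset.sum_le_sum fun j _ => ?_
          rw [abs_mul]
          exact mul_le_mul (hentry z hz i j) (norm_le_pi_norm v j) (abs_nonneg _) hEBx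
      _ = (d:ℝ) * EB.eval ‖x‖ * ‖v‖ := by
          rw [Finset.sum_const, Finset.card_univ, Fintype.card_fin, nsmul_eq_mul]; ring
  have hlip : ∀ z ∈ segment ℝ x₀ x,
      ‖y x - y z‖ ≤ ((d:ℝ) * EB.eval ‖x‖) * ‖x - z‖ := by
    intro z hz
    exact Convex.norm_image_sub_le_of_norm_hasFDerivWithin_le
      (fun w hw => (hjac w (hsegI hw)).hasFDerivWithinAt) (fun w hw => hop w hw)
      (convex_segment _ _) hz (right_mem_segment ℝ x₀ x)
  -- the curve
  set γ : ℝ → (Fin d → ℝ) := fun s => x₀ + (1 - Real.exp (-s)) • (x - x₀) with hγ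
  have hγmem : ∀ s : ℝ, 0 ≤ s → γ s ∈ segment ℝ x₀ x := by
    intro s hs
    rw [segment_eq_image']
    refine ⟨1 - Real.exp (-s), ⟨?_, ?_⟩, rfl⟩
    · have : Real.exp (-s) ≤ 1 := Real.exp_le_one_iff.2 (by linarith)
      linarith
    · have := Real.exp_pos (-s)
      linarith
  have hγI : ∀ s : ℝ, 0 ≤ s → γ s ∈ I := fun s hs => hsegI (hγmem s hs)
  have hγ0 : γ 0 = x₀ := by simp [hγ]
  have hxγ : ∀ s : ℝ, x - γ s = Real.exp (-s) • (x - x₀) := by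
    intro s; simp only [hγ]; module
  set Y : ℝ → Fin (n + (d + 2)) → ℝ := fun s =>
    Fin.append (y (γ s)) (Fin.cons (Real.exp (-s)) (Fin.snoc (fun j => x j - x₀ j) s)) with hY
  set V : ℝ → Fin (n + (d + 2)) → ℝ := fun s =>
    Fin.append
      (fun i => Real.exp (-s) * ∑ j : Fin d, MvPolynomial.eval (y (γ s)) (p i j) * (x j - x₀ j))
      (Fin.cons (- Real.exp (-s)) (Fin.snoc (fun _ => (0:ℝ)) 1)) with hV
  -- component values of Y and V
  have hYmain : ∀ s : ℝ, ∀ i : Fin n, Y s (Fin.castAdd (d + 2) i) = y (γ s) i := by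
    intro s i; simp only [hY, Fin.append_left]
  have hYu : ∀ s : ℝ, Y s (Fin.natAdd n 0) = Real.exp (-s) := by
    intro s; simp only [hY, Fin.append_right, Fin.cons_zero]
  have hYw : ∀ s : ℝ, Y s (Fin.natAdd n (Fin.succ (Fin.last d))) = s := by
    intro s; simp only [hY, Fin.append_right, Fin.cons_succ, Fin.snoc_last]
  have hYc : ∀ s : ℝ, ∀ j : Fin d,
      Y s (Fin.natAdd n (Fin.succ (Fin.castSucc j))) = x j - x₀ j := by
    intro s j; simp only [hY, Fin.append_right, Fin.cons_succ, Fin.snoc_castSucc]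
  have hVmain : ∀ s : ℝ, ∀ i : Fin n, V s (Fin.castAdd (d + 2) i)
      = Real.exp (-s) * ∑ j : Fin d,
          MvPolynomial.eval (y (γ s)) (p i j) * (x j - x₀ j) := by
    intro s i; simp only [hV, Fin.append_left]
  have hVu : ∀ s : ℝ, V s (Fin.natAdd n 0) = - Real.exp (-s) := by
    intro s; simp only [hV, Fin.append_right, Fin.cons_zero]
  have hVw : ∀ s : ℝ, V s (Fin.natAdd n (Fin.succ (Fin.last d))) = 1 := by
    intro s; simp only [hV, Fin.append_right, Fin.cons_succ, Fin.snoc_last]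
  have hVc : ∀ s : ℝ, ∀ j : Fin d,
      V s (Fin.natAdd n (Fin.succ (Fin.castSucc j))) = 0 := by
    intro s j; simp only [hV, Fin.append_right, Fin.cons_succ, Fin.snoc_castSucc]
  have hcomp : ∀ s : ℝ, (Y s) ∘ (Fin.castAdd (d + 2)) = y (γ s) := by
    intro s; funext i; exact hYmain s i
  have hPeval : ∀ s : ℝ, pEval P (Y s) = V s := by
    intro s; funext k
    refine Fin.addCases (fun i => ?_) (fun i => ?_) k
    · show MvPolynomial.eval (Y s) (P (Fin.castAdd (d + 2) i)) = V s (Fin.castAdd (d + 2) i)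
      rw [hPmain, hVmain, map_mul, map_sum, MvPolynomial.eval_X, hYu]
      congr 1
      refine Finset.sum_congr rfl fun j _ => ?_
      rw [map_mul, MvPolynomial.eval_rename, hcomp, MvPolynomial.eval_X, hYc]
    · show MvPolynomial.eval (Y s) (P (Fin.natAdd n i)) = V s (Fin.natAdd n i)
      refine Fin.cases ?_ (fun j => ?_) i
      · rw [hPu, hVu, map_neg, MvPolynomial.eval_X, hYu]
      · refine Fin.lastCases ?_ (fun j' => ?_) j
        · rw [hPw, hVw, map_one]
        · rw [hPc, hVc, map_zero]
  -- derivative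
  have hexp : ∀ t : ℝ, HasDerivAt (fun s : ℝ => Real.exp (-s)) (-Real.exp (-t)) t := by
    intro t
    simpa [Function.comp_def] using (Real.hasDerivAt_exp (-t)).comp t ((hasDerivAt_id t).neg)
  have hγ' : ∀ t : ℝ, HasDerivAt γ (Real.exp (-t) • (x - x₀)) t := by
    intro t
    have h3 : HasDerivAt (fun s : ℝ => 1 - Real.exp (-s)) (Real.exp (-t)) t := by
      simpa [Pi.sub_def] using (hasDerivAt_const t (1:ℝ)).sub (hexp t)
    simpa [hγ] using (h3.smul_const (x - x₀)).const_add x₀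
  have hderiv : ∀ t : ℝ, 0 ≤ t → HasDerivAt Y (pEval P (Y t)) t := by
    intro t ht
    rw [hPeval]
    have hyγ : HasDerivAt (fun s => y (γ s))
        (matLin (fun i j => MvPolynomial.eval (y (γ t)) (p i j))
          (Real.exp (-t) • (x - x₀))) t := by
      simpa [Function.comp_def] using
        (hjac (γ t) (hγI t ht)).comp_hasDerivAt t (hγ' t)
    refine hasDerivAt_pi.2 fun k => ?_
    refine Fin.addCases (fun i => ?_) (fun i => ?_) k
    · have e1 : (fun s => Y s (Fin.castAdd (d + 2) i)) = fun s => y (γ s) i := by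
        funext s; exact hYmain s i
      have e3 : V t (Fin.castAdd (d + 2) i)
          = matLin (fun i j => MvPolynomial.eval (y (γ t)) (p i j))
            (Real.exp (-t) • (x - x₀)) i := by
        rw [hVmain, matLin_apply (fun i j => MvPolynomial.eval (y (γ t)) (p i j)) _ i, Finset.mul_sum]
        refine Finset.sum_congr rfl fun j _ => ?_
        simp only [Pi.smul_apply, smul_eq_mul, Pi.sub_apply]
        ring
      rw [e1, e3]
      exact hasDerivAt_pi.1 hyγ i
    · refine Fin.cases ?_ (fun j => ?_) i
      · have e1 : (fun s => Y s (Fin.natAdd n 0)) = fun s : ℝ => Real.exp (-s) := by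
          funext s; exact hYu s
        rw [e1, hVu]; exact hexp t
      · refine Fin.lastCases ?_ (fun j' => ?_) j
        · have e1 : (fun s => Y s (Fin.natAdd n (Fin.succ (Fin.last d)))) = fun s : ℝ => s := by
            funext s; exact hYw s
          rw [e1, hVw]; exact hasDerivAt_id t
        · have e1 : (fun s => Y s (Fin.natAdd n (Fin.succ (Fin.castSucc j'))))
              = fun _ : ℝ => x j' - x₀ j' := by
            funext s; exact hYc s j'
          rw [e1, hVc]; exact hasDerivAt_const t _
  -- continuity / integrability
  have hγcont : Continuous γ := by
    have h1 : Continuous fun s : ℝ => 1 - Real.exp (-s) :=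
      continuous_const.sub (Real.continuous_exp.comp continuous_neg)
    exact continuous_const.add (h1.smul continuous_const)
  have hVcont : ∀ t : ℝ, 0 ≤ t → ContinuousOn (fun s => ‖pEval P (Y s)‖) (Set.Icc 0 t) := by
    intro t ht
    have e0 : (fun s => ‖pEval P (Y s)‖) = fun s => ‖V s‖ := by
      funext s; rw [hPeval]
    rw [e0]
    have hyγcont : ContinuousOn (fun s => y (γ s)) (Set.Icc 0 t) := fun s hs =>
      (((hjac (γ s) (hγI s hs.1)).continuousAt).comp hγcont.continuousAt).continuousWithinAt
    refine ContinuousOn.norm ?_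
    rw [continuousOn_pi]
    intro k
    refine Fin.addCases (fun i => ?_) (fun i => ?_) k
    · have e1 : (fun s => V s (Fin.castAdd (d + 2) i)) = fun s =>
          Real.exp (-s) * ∑ j : Fin d,
            MvPolynomial.eval (y (γ s)) (p i j) * (x j - x₀ j) := by
        funext s; exact hVmain s i
      rw [e1]
      refine ContinuousOn.mul
        ((Real.continuous_exp.comp continuous_neg).continuousOn) ?_
      refine continuousOn_finset_sum _ fun j _ => ContinuousOn.mul ?_ continuousOn_const
      exact (MvPolynomial.continuous_eval (p i j)).comp_continuousOn hyγcont
    · refine Fin.cases ?_ (fun j => ?_) i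
      · have e1 : (fun s => V s (Fin.natAdd n 0)) = fun s : ℝ => -Real.exp (-s) := by
          funext s; exact hVu s
        rw [e1]
        exact ((Real.continuous_exp.comp continuous_neg).neg).continuousOn
      · refine Fin.lastCases ?_ (fun j' => ?_) j
        · have e1 : (fun s => V s (Fin.natAdd n (Fin.succ (Fin.last d)))) = fun _ : ℝ => (1:ℝ) := by
            funext s; exact hVw s
          rw [e1]; exact continuousOn_const
        · have e1 : (fun s => V s (Fin.natAdd n (Fin.succ (Fin.castSucc j'))))
              = fun _ : ℝ => (0:ℝ) := by
            funext s; exact hVc s j'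
          rw [e1]; exact continuousOn_const
  have hint : ∀ t : ℝ, 0 ≤ t →
      IntervalIntegrable (fun s => ‖pEval P (Y s)‖) MeasureTheory.volume 0 t := by
    intro t ht
    refine ContinuousOn.intervalIntegrable ?_
    rw [Set.uIcc_of_le ht]
    exact hVcont t ht
  -- length lower bound
  have hlen_low : ∀ t : ℝ, 0 ≤ t → t ≤ pLen P Y t := by
    intro t ht
    have h1 : ∀ s ∈ Set.Icc (0:ℝ) t, (1:ℝ) ≤ ‖pEval P (Y s)‖ := by
      intro s _
      have h2 : pEval P (Y s) (Fin.natAdd n (Fin.succ (Fin.last d))) = 1 := by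
        rw [hPeval]; exact hVw s
      calc (1:ℝ) = ‖pEval P (Y s) (Fin.natAdd n (Fin.succ (Fin.last d)))‖ := by
            rw [h2, norm_one]
        _ ≤ ‖pEval P (Y s)‖ := norm_le_pi_norm _ _
    calc t = ∫ _s in (0:ℝ)..t, (1:ℝ) := by
          rw [intervalIntegral.integral_const, smul_eq_mul, sub_zero, mul_one]
      _ ≤ ∫ s in (0:ℝ)..t, ‖pEval P (Y s)‖ :=
          intervalIntegral.integral_mono_on ht intervalIntegrable_const (hint t ht) h1
  -- length upper bound
  have hxx0 : ‖x - x₀‖ ≤ ‖x₀‖ + ‖x‖ := by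
    have := norm_sub_le x x₀; linarith
  have hCpx : (0:ℝ) ≤ Cp.eval ‖x‖ := hCpnonneg _ (norm_nonneg x)
  have hlen_up : ∀ t : ℝ, 0 ≤ t → pLen P Y t ≤ (Cp.eval ‖x‖ + 1) * t := by
    intro t ht
    have hup : ∀ s ∈ Set.Icc (0:ℝ) t, ‖pEval P (Y s)‖ ≤ Cp.eval ‖x‖ + 1 := by
      intro s hs
      rw [hPeval, pi_norm_le_iff_of_nonneg (by linarith)]
      intro k
      refine Fin.addCases (fun i => ?_) (fun i => ?_) k
      · rw [hVmain, Real.norm_eq_abs, abs_mul, abs_of_pos (Real.exp_pos _)]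
        have hsum : |∑ j : Fin d, MvPolynomial.eval (y (γ s)) (p i j) * (x j - x₀ j)|
            ≤ Cp.eval ‖x‖ := by
          rw [hCpval]
          calc |∑ j : Fin d, MvPolynomial.eval (y (γ s)) (p i j) * (x j - x₀ j)|
              ≤ ∑ j : Fin d, |MvPolynomial.eval (y (γ s)) (p i j) * (x j - x₀ j)| :=
                Finset.abs_sum_le_sum_abs _ _
            _ ≤ ∑ _j : Fin d, EB.eval ‖x‖ * (‖x₀‖ + ‖x‖) := by
                refine Finset.sum_le_sum fun j _ => ?_
                rw [abs_mul]
                refine mul_le_mul (hentry (γ s) (hγmem s hs.1) i j) ?_ (abs_nonneg _) hEBx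
                have h3 : |x j - x₀ j| ≤ ‖x - x₀‖ := by
                  have := norm_le_pi_norm (x - x₀) j
                  simpa only [Pi.sub_apply, Real.norm_eq_abs] using this
                exact h3.trans hxx0
            _ = (d:ℝ) * EB.eval ‖x‖ * (‖x₀‖ + ‖x‖) := by
                rw [Finset.sum_const, Finset.card_univ, Fintype.card_fin, nsmul_eq_mul]; ring
        have hexp1 : Real.exp (-s) ≤ 1 := Real.exp_le_one_iff.2 (by linarith [hs.1])
        have habs : (0:ℝ) ≤ |∑ j : Fin d, MvPolynomial.eval (y (γ s)) (p i j) * (x j - x₀ j)| :=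
          abs_nonneg _
        nlinarith
      · refine Fin.cases ?_ (fun j => ?_) i
        · rw [hVu, Real.norm_eq_abs, abs_neg, abs_of_pos (Real.exp_pos _)]
          have := Real.exp_le_one_iff.2 (neg_nonpos.2 hs.1)
          linarith
        · refine Fin.lastCases ?_ (fun j' => ?_) j
          · rw [hVw, norm_one]; linarith
          · rw [hVc, norm_zero]; linarith
    calc pLen P Y t ≤ ∫ _s in (0:ℝ)..t, (Cp.eval ‖x‖ + 1) :=
          intervalIntegral.integral_mono_on ht (hint t ht) intervalIntegrable_const hup
      _ = (Cp.eval ‖x‖ + 1) * t := by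
          rw [intervalIntegral.integral_const, smul_eq_mul]; ring
  refine ⟨Y, ?_, hderiv, ?_, hlen_low⟩
  · -- initial condition
    funext k
    refine Fin.addCases (fun i => ?_) (fun i => ?_) k
    · show Y 0 (Fin.castAdd (d + 2) i) = MvPolynomial.eval x (Q (Fin.castAdd (d + 2) i))
      rw [hYmain, hQmain, hγ0, hinit, MvPolynomial.eval_C]
    · show Y 0 (Fin.natAdd n i) = MvPolynomial.eval x (Q (Fin.natAdd n i))
      refine Fin.cases ?_ (fun j => ?_) i
      · rw [hYu, hQu, map_one, neg_zero, Real.exp_zero]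
      · refine Fin.lastCases ?_ (fun j' => ?_) j
        · rw [hYw, hQw, map_zero]
        · rw [hYc, hQc, map_sub, MvPolynomial.eval_X, MvPolynomial.eval_C]
  · -- approximation
    intro t ht μ hμ hΩle
    have h1 : (Cp.eval ‖x‖ + 1) * (μ + Cp.eval ‖x‖) ≤ (Cp.eval ‖x‖ + 1) * t :=
      hΩle.trans (hlen_up t ht)
    have h2 : μ + Cp.eval ‖x‖ ≤ t := le_of_mul_le_mul_left h1 (by linarith)
    rw [pi_norm_le_iff_of_nonneg (Real.exp_pos _).le]
    intro i
    have hcast : Fin.castLE hd i = Fin.castAdd (d + 2) (Fin.castLE hn i) := Fin.ext rfl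
    have hYi : Y t (Fin.castLE hd i) = y (γ t) (Fin.castLE hn i) := by
      rw [hcast]; exact hYmain t _
    have hfx : f x i = y x (Fin.castLE hn i) := hval x hx i
    have key : ‖y (γ t) (Fin.castLE hn i) - y x (Fin.castLE hn i)‖ ≤ Real.exp (-μ) := by
      have s1 : ‖y (γ t) (Fin.castLE hn i) - y x (Fin.castLE hn i)‖ ≤ ‖y (γ t) - y x‖ := by
        have := norm_le_pi_norm (y (γ t) - y x) (Fin.castLE hn i)
        simpa only [Pi.sub_apply] using this
      have s2 : ‖y (γ t) - y x‖ = ‖y x - y (γ t)‖ := norm_sub_rev _ _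
      have s3 : ‖y x - y (γ t)‖ ≤ ((d:ℝ) * EB.eval ‖x‖) * ‖x - γ t‖ :=
        hlip (γ t) (hγmem t ht)
      have s4 : ‖x - γ t‖ = Real.exp (-t) * ‖x - x₀‖ := by
        rw [hxγ t, norm_smul, Real.norm_eq_abs, abs_of_pos (Real.exp_pos _)]
      have s5 : ((d:ℝ) * EB.eval ‖x‖) * (Real.exp (-t) * ‖x - x₀‖)
          ≤ Cp.eval ‖x‖ * Real.exp (-t) := by
        rw [hCpval]
        have he := (Real.exp_pos (-t)).le
        have h4 : (d:ℝ) * EB.eval ‖x‖ * ‖x - x₀‖ ≤ (d:ℝ) * EB.eval ‖x‖ * (‖x₀‖ + ‖x‖) :=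
          mul_le_mul_of_nonneg_left hxx0 hK
        nlinarith [mul_le_mul_of_nonneg_right h4 he]
      have s6 : Cp.eval ‖x‖ * Real.exp (-t) ≤ Real.exp (-μ) := by
        have h3 : Real.exp (-t) ≤ Real.exp (-(μ + Cp.eval ‖x‖)) :=
          Real.exp_le_exp.2 (by linarith)
        calc Cp.eval ‖x‖ * Real.exp (-t)
            ≤ Cp.eval ‖x‖ * Real.exp (-(μ + Cp.eval ‖x‖)) :=
              mul_le_mul_of_nonneg_left h3 hCpx
          _ = (Cp.eval ‖x‖ * Real.exp (-(Cp.eval ‖x‖))) * Real.exp (-μ) := by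
              rw [neg_add, Real.exp_add]; ring
          _ ≤ 1 * Real.exp (-μ) := by
              refine mul_le_mul_of_nonneg_right ?_ (Real.exp_pos _).le
              rw [Real.exp_neg, ← div_eq_mul_inv, div_le_one (Real.exp_pos _)]
              linarith [Real.add_one_le_exp (Cp.eval ‖x‖)]
          _ = Real.exp (-μ) := one_mul _
      calc ‖y (γ t) (Fin.castLE hn i) - y x (Fin.castLE hn i)‖
          ≤ ‖y (γ t) - y x‖ := s1
        _ = ‖y x - y (γ t)‖ := s2
        _ ≤ ((d:ℝ) * EB.eval ‖x‖) * ‖x - γ t‖ := s3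
        _ = ((d:ℝ) * EB.eval ‖x‖) * (Real.exp (-t) * ‖x - x₀‖) := by rw [s4]
        _ ≤ Cp.eval ‖x‖ * Real.exp (-t) := s5
        _ ≤ Real.exp (-μ) := s6
    calc ‖((fun i : Fin e => Y t (Fin.castLE hd i)) - f x) i‖
        = ‖y (γ t) (Fin.castLE hn i) - y x (Fin.castLE hn i)‖ := by
          rw [Pi.sub_apply, hYi, hfx]
      _ ≤ Real.exp (-μ) := key
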